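/- arXiv:2605.23879 — 4 statements merged into one kernel-verified Lean document; each statement's English description precedes it below -/
import Mathlib

section
/- Let Θ be a nonempty compact topological space, T > 0, and let s : [0,T] × Θ → ℝ be continuous, such that for each θ the map t ↦ s(t,θ) is continuously differentiable with partial derivative ∂_t s continuous on [0,T] × Θ. Define M(t) = max_{θ∈Θ} s(t,θ) and m(t) = min_{θ∈Θ} s(t,θ). Then for each t ∈ [0,T), the upper Dini derivative satisfies D⁺M(t) ≤ max_{θ ∈ Argmax s(t,·)} ∂_t s(t,θ), and the lower Dini derivative satisfies D⁻m(t) ≥ min_{θ ∈ Argmin s(t,·)} ∂_t s(t,θ). -/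
open Filter Set

/-- Upper Dini derivative: `D⁺g(t) = limsup_{h↓0} (g(t+h) − g(t))/h`. -/
noncomputable def upperDini (g : ℝ → ℝ) (t : ℝ) : ℝ :=
  Filter.limsup (fun h => (g (t + h) - g t) / h) (nhdsWithin 0 (Set.Ioi 0))

/-- Lower Dini derivative: `D⁻g(t) = liminf_{h↓0} (g(t+h) − g(t))/h`. -/
noncomputable def lowerDini (g : ℝ → ℝ) (t : ℝ) : ℝ :=
  Filter.liminf (fun h => (g (t + h) - g t) / h) (nhdsWithin 0 (Set.Ioi 0))


theorem dini_key_aux {Θ : Type*} [TopologicalSpace Θ] [CompactSpace Θ] [Nonempty Θ]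
    (T : ℝ) (hT : 0 < T) (s ds : ℝ → Θ → ℝ)
    (hcont : ContinuousOn (fun p : ℝ × Θ => s p.1 p.2) (Set.Icc 0 T ×ˢ Set.univ))
    (hderiv : ∀ θ : Θ, ∀ t ∈ Set.Icc 0 T,
      HasDerivWithinAt (fun τ => s τ θ) (ds t θ) (Set.Icc 0 T) t)
    (hdscont : ContinuousOn (fun p : ℝ × Θ => ds p.1 p.2) (Set.Icc 0 T ×ˢ Set.univ))
    (t : ℝ) (ht : t ∈ Set.Ico 0 T) (ε : ℝ) (hε : 0 < ε) :
    ∃ C : ℝ, ∀ᶠ h in nhdsWithin 0 (Set.Ioi 0),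
      t + h ∈ Set.Icc 0 T ∧
      ((⨆ θ, s (t+h) θ) - (⨆ θ, s t θ))/h
        ≤ sSup (ds t '' {θ : Θ | ∀ θ', s t θ' ≤ s t θ}) + ε ∧
      -C ≤ ((⨆ θ, s (t+h) θ) - (⨆ θ, s t θ))/h := by
  obtain ⟨ht0, htT⟩ := ht
  have htmem : t ∈ Set.Icc 0 T := ⟨ht0, le_of_lt htT⟩
  set L := sSup (ds t '' {θ : Θ | ∀ θ', s t θ' ≤ s t θ}) with hLdef
  -- continuity of slices
  have hsl : ∀ τ ∈ Set.Icc 0 T, Continuous (fun θ => s τ θ) := by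
    intro τ hτ
    rw [← continuousOn_univ]
    exact hcont.comp ((continuous_const.prodMk continuous_id).continuousOn)
      (fun θ _ => ⟨hτ, trivial⟩)
  have hdsl : ∀ τ ∈ Set.Icc 0 T, Continuous (fun θ => ds τ θ) := by
    intro τ hτ
    rw [← continuousOn_univ]
    exact hdscont.comp ((continuous_const.prodMk continuous_id).continuousOn)
      (fun θ _ => ⟨hτ, trivial⟩)
  have hbA : ∀ τ ∈ Set.Icc 0 T, BddAbove (Set.range (fun θ => s τ θ)) :=
    fun τ hτ => (isCompact_range (hsl τ hτ)).bddAbove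
  -- argmax
  obtain ⟨θ₀, -, hθ₀⟩ := isCompact_univ.exists_isMaxOn univ_nonempty ((hsl t htmem).continuousOn)
  have hθ₀' : ∀ θ', s t θ' ≤ s t θ₀ := fun θ' => hθ₀ (Set.mem_univ θ')
  have hAclosed : IsClosed {θ : Θ | ∀ θ', s t θ' ≤ s t θ} := by
    have : {θ : Θ | ∀ θ', s t θ' ≤ s t θ} = ⋂ θ', {θ | s t θ' ≤ s t θ} := by ext; simp
    rw [this]
    exact isClosed_iInter fun θ' => isClosed_le continuous_const (hsl t htmem)
  have hAcomp : IsCompact {θ : Θ | ∀ θ', s t θ' ≤ s t θ} := hAclosed.isCompact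
  have hL : ∀ θ, (∀ θ', s t θ' ≤ s t θ) → ds t θ ≤ L :=
    fun θ hθ => le_csSup ((hAcomp.image (hdsl t htmem)).bddAbove) (Set.mem_image_of_mem _ hθ)
  -- global bound C on ds
  obtain ⟨C, hC⟩ := (isCompact_Icc.prod isCompact_univ).exists_bound_of_continuousOn hdscont
  have hC' : ∀ τ ∈ Set.Icc 0 T, ∀ θ, |ds τ θ| ≤ C := fun τ hτ θ => hC (τ, θ) ⟨hτ, trivial⟩
  have hC0 : 0 ≤ C := le_trans (abs_nonneg _) (hC' t htmem θ₀)
  -- tube lemma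
  obtain ⟨W, hWopen, hWeq⟩ := continuousOn_iff'.mp hdscont (Set.Iio (L + ε)) isOpen_Iio
  have hsub : ({t} ×ˢ {θ : Θ | ∀ θ', s t θ' ≤ s t θ}) ⊆ W := by
    rintro ⟨τ, θ⟩ ⟨hτ, hθ⟩
    have hτt : τ = t := hτ
    subst hτt
    have h1 : (τ, θ) ∈ (fun p : ℝ × Θ => ds p.1 p.2) ⁻¹' Set.Iio (L + ε)
        ∩ (Set.Icc 0 T ×ˢ Set.univ) :=
      ⟨lt_of_le_of_lt (hL θ hθ) (lt_add_of_pos_right _ hε), ⟨htmem, trivial⟩⟩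
    rw [hWeq] at h1
    exact h1.1
  obtain ⟨u, v, huo, hvo, htu, hAv, huv⟩ :=
    generalized_tube_lemma isCompact_singleton hAcomp hWopen hsub
  have htube : ∀ τ ∈ Set.Icc 0 T, τ ∈ u → ∀ θ ∈ v, ds τ θ < L + ε := by
    intro τ hτ hτu θ hθ
    have h1 : (τ, θ) ∈ W ∩ (Set.Icc 0 T ×ˢ Set.univ) := ⟨huv ⟨hτu, hθ⟩, hτ, trivial⟩
    rw [← hWeq] at h1
    exact h1.1
  obtain ⟨δ, hδ0, hδ⟩ := Metric.isOpen_iff.mp huo t (htu rfl)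
  -- complement of v
  obtain ⟨η, hη0, hηB⟩ : ∃ η > 0, ∀ θ ∈ vᶜ, s t θ ≤ s t θ₀ - η := by
    rcases Set.eq_empty_or_nonempty vᶜ with hE | hNE
    · exact ⟨1, one_pos, by rw [hE]; simp⟩
    · obtain ⟨θB, hθBmem, hθBmax⟩ :=
        (hvo.isClosed_compl.isCompact).exists_isMaxOn hNE ((hsl t htmem).continuousOn)
      have h1 : s t θB < s t θ₀ := by
        rcases lt_or_ge (s t θB) (s t θ₀) with h | h
        · exact h
        · exact absurd (hAv fun θ' => le_trans (hθ₀' θ') h) hθBmem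
      exact ⟨s t θ₀ - s t θB, by linarith, fun θ hθ => by
        have := hθBmax hθ
        simp only [Set.mem_setOf_eq] at this ⊢
        linarith⟩
  -- choice of h₀
  have hD1 : (0:ℝ) < C + |L + ε| + 1 := by positivity
  obtain ⟨h₀, hh₀0, hh₀δ, hh₀T, hh₀η⟩ :
      ∃ h₀ > 0, h₀ ≤ δ ∧ h₀ ≤ T - t ∧ (C + |L + ε|) * h₀ ≤ η := by
    refine ⟨min (min δ (T - t)) (η / (C + |L + ε| + 1)), ?_, ?_, ?_, ?_⟩
    · have : 0 < T - t := by linarith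
      positivity
    · exact le_trans (min_le_left _ _) (min_le_left _ _)
    · exact le_trans (min_le_left _ _) (min_le_right _ _)
    · have h1 : min (min δ (T - t)) (η / (C + |L + ε| + 1)) ≤ η / (C + |L + ε| + 1) :=
        min_le_right _ _
      have h2 : (C + |L + ε|) * (η / (C + |L + ε| + 1)) ≤ η := by
        rw [mul_comm, div_mul_eq_mul_div, div_le_iff₀ hD1]
        nlinarith [abs_nonneg (L + ε)]
      calc (C + |L + ε|) * min (min δ (T - t)) (η / (C + |L + ε| + 1))
          ≤ (C + |L + ε|) * (η / (C + |L + ε| + 1)) := by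
            apply mul_le_mul_of_nonneg_left h1
            positivity
        _ ≤ η := h2
  refine ⟨C, ?_⟩
  filter_upwards [Ioo_mem_nhdsGT_of_mem (⟨le_refl (0:ℝ), hh₀0⟩ : (0:ℝ) ∈ Set.Ico 0 h₀)]
    with h hh
  obtain ⟨hhpos, hhlt⟩ := hh
  have htT' : t + h < T := by linarith [lt_of_lt_of_le hhlt hh₀T]
  have hth : t + h ∈ Set.Icc 0 T := ⟨by linarith, le_of_lt htT'⟩
  have hsub2 : Set.Icc t (t + h) ⊆ Set.Icc 0 T := Set.Icc_subset_Icc ht0 (le_of_lt htT')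
  -- two-sided bound via MVT
  have habs : ∀ θ, |s (t + h) θ - s t θ| ≤ C * h := by
    intro θ
    have := norm_image_sub_le_of_norm_deriv_le_segment'
      (f := fun τ => s τ θ) (f' := fun τ => ds τ θ) (a := t) (b := t + h) (C := C)
      (fun x hx => (hderiv θ x (hsub2 hx)).mono hsub2)
      (fun x hx => hC' x (hsub2 (Set.mem_Icc_of_Ico hx)) θ)
      (t + h) (Set.right_mem_Icc.mpr (by linarith))
    simpa using this
  -- one-sided bound on v via monotonicity
  have hub : ∀ θ, s (t + h) θ ≤ s t θ₀ + (L + ε) * h := by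
    intro θ
    by_cases hθv : θ ∈ v
    · have hD : ∀ x ∈ Set.Ioo t (t + h),
          HasDerivAt (fun τ => s τ θ - (L + ε) * τ) (ds x θ - (L + ε)) x := by
        intro x hx
        have hx' : x ∈ Set.Icc 0 T := hsub2 ⟨le_of_lt hx.1, le_of_lt hx.2⟩
        have h1 : HasDerivAt (fun τ => s τ θ) (ds x θ) x :=
          (hderiv θ x hx').hasDerivAt (Icc_mem_nhds (by linarith [hx.1]) (by linarith [hx.2]))
        have h2 : HasDerivAt (fun τ => (L + ε) * τ) (L + ε) x := by
          simpa using (hasDerivAt_id x).const_mul (L + ε)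
        exact h1.sub h2
      have hmono : AntitoneOn (fun τ => s τ θ - (L + ε) * τ) (Set.Icc t (t + h)) := by
        apply antitoneOn_of_deriv_nonpos (convex_Icc t (t + h))
        · exact ContinuousOn.sub
            (fun x hx => ((hderiv θ x (hsub2 hx)).mono hsub2).continuousWithinAt)
            ((continuous_const.mul continuous_id).continuousOn)
        · intro x hx
          rw [interior_Icc] at hx
          exact (hD x hx).differentiableAt.differentiableWithinAt
        · intro x hx
          rw [interior_Icc] at hx
          rw [(hD x hx).deriv]
          have hxu : x ∈ u := hδ (by
            simp only [Metric.mem_ball, Real.dist_eq]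
            have : |x - t| = x - t := abs_of_pos (by linarith [hx.1])
            rw [this]
            linarith [hx.2])
          have := htube x (hsub2 ⟨le_of_lt hx.1, le_of_lt hx.2⟩) hxu θ hθv
          linarith
      have h1 := hmono (Set.left_mem_Icc.mpr (by linarith)) (Set.right_mem_Icc.mpr (by linarith))
        (by linarith : t ≤ t + h)
      simp only at h1
      have hexp : (L + ε) * (t + h) = (L + ε) * t + (L + ε) * h := by ring
      have hsθ : s t θ ≤ s t θ₀ := hθ₀' θ
      linarith [h1, hexp]
    · have h1 := abs_le.mp (habs θ)
      have h2 : s t θ ≤ s t θ₀ - η := hηB θ hθv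
      have h3 : (C + |L + ε|) * h ≤ η := by
        calc (C + |L + ε|) * h ≤ (C + |L + ε|) * h₀ := by
              apply mul_le_mul_of_nonneg_left (le_of_lt hhlt); positivity
          _ ≤ η := hh₀η
      have h4 : -(L + ε) * h ≤ |L + ε| * h :=
        mul_le_mul_of_nonneg_right (neg_le_abs _) (le_of_lt hhpos)
      nlinarith
  have hMt : (⨆ θ, s t θ) = s t θ₀ :=
    le_antisymm (ciSup_le hθ₀') (le_ciSup (hbA t htmem) θ₀)
  have hMub : (⨆ θ, s (t + h) θ) ≤ s t θ₀ + (L + ε) * h := ciSup_le hub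
  have hMlb : s t θ₀ - C * h ≤ (⨆ θ, s (t + h) θ) := by
    have h1 := abs_le.mp (habs θ₀)
    have h2 : s (t + h) θ₀ ≤ ⨆ θ, s (t + h) θ := le_ciSup (hbA (t + h) hth) θ₀
    linarith
  refine ⟨hth, ?_, ?_⟩
  · rw [div_le_iff₀ hhpos, hMt]
    linarith
  · rw [le_div_iff₀ hhpos, hMt]
    linarith

/-- For a jointly continuous `s` on `[0,T] × Θ` (with `Θ` compact nonempty), continuously
differentiable in time, the upper Dini derivative of the running maximum `M(t) = max_θ s(t,θ)` is
bounded by the maximum of `∂_t s(t,·)` over the argmax set, and the lower Dini derivative of the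
running minimum `m(t) = min_θ s(t,θ)` is bounded below by the minimum of `∂_t s(t,·)` over the
argmin set. -/
theorem dini_derivative_of_extremum
    {Θ : Type*} [TopologicalSpace Θ] [CompactSpace Θ] [Nonempty Θ]
    (T : ℝ) (hT : 0 < T)
    (s ds : ℝ → Θ → ℝ)
    (hcont : ContinuousOn (fun p : ℝ × Θ => s p.1 p.2) (Set.Icc 0 T ×ˢ Set.univ))
    (hderiv : ∀ θ : Θ, ∀ t ∈ Set.Icc 0 T,
      HasDerivWithinAt (fun τ => s τ θ) (ds t θ) (Set.Icc 0 T) t)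
    (hdscont : ContinuousOn (fun p : ℝ × Θ => ds p.1 p.2) (Set.Icc 0 T ×ˢ Set.univ))
    (M m : ℝ → ℝ)
    (hM : ∀ t, M t = ⨆ θ : Θ, s t θ)
    (hm : ∀ t, m t = ⨅ θ : Θ, s t θ)
    (t : ℝ) (ht : t ∈ Set.Ico 0 T) :
    upperDini M t ≤ sSup (ds t '' {θ : Θ | ∀ θ' : Θ, s t θ' ≤ s t θ}) ∧
    sInf (ds t '' {θ : Θ | ∀ θ' : Θ, s t θ ≤ s t θ'}) ≤ lowerDini m t := by
  have htmem : t ∈ Set.Icc 0 T := ⟨ht.1, le_of_lt ht.2⟩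
  constructor
  · apply le_of_forall_pos_le_add
    intro ε hε
    obtain ⟨C, hev⟩ := dini_key_aux T hT s ds hcont hderiv hdscont t ht ε hε
    have hev' : ∀ᶠ h in nhdsWithin (0:ℝ) (Set.Ioi 0),
        (M (t + h) - M t) / h ≤ sSup (ds t '' {θ : Θ | ∀ θ', s t θ' ≤ s t θ}) + ε ∧
        -C ≤ (M (t + h) - M t) / h := by
      filter_upwards [hev] with h hh
      rw [hM, hM]
      exact ⟨hh.2.1, hh.2.2⟩
    have hcb : IsCoboundedUnder (· ≤ ·) (nhdsWithin (0:ℝ) (Set.Ioi 0))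
        (fun h => (M (t + h) - M t) / h) :=
      Filter.IsBoundedUnder.isCoboundedUnder_le
        ⟨-C, Filter.eventually_map.mpr (hev'.mono fun h hh => hh.2)⟩
    exact Filter.limsup_le_of_le hcb (hev'.mono fun h hh => hh.1)
  · apply le_of_forall_pos_le_add
    intro ε hε
    obtain ⟨C, hev⟩ := dini_key_aux T hT (fun τ θ => -(s τ θ)) (fun τ θ => -(ds τ θ))
      hcont.neg (fun θ τ hτ => (hderiv θ τ hτ).neg) hdscont.neg t ht ε hε
    have hnegsup : ∀ τ, (⨆ θ, -(s τ θ)) = -(⨅ θ, s τ θ) := by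
      intro τ
      rw [iInf, Real.sInf_def, neg_neg, iSup]
      congr 1
      ext x
      simp only [Set.mem_range, Set.mem_neg]
      constructor <;> rintro ⟨θ, hθ⟩ <;> exact ⟨θ, by linarith⟩
    have hinf_eq : sSup ((fun θ => -(ds t θ)) '' {θ : Θ | ∀ θ', -(s t θ') ≤ -(s t θ)})
        = - sInf (ds t '' {θ : Θ | ∀ θ', s t θ ≤ s t θ'}) := by
      have hset : {θ : Θ | ∀ θ', -(s t θ') ≤ -(s t θ)} = {θ : Θ | ∀ θ', s t θ ≤ s t θ'} := by
        ext θ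
        constructor <;> intro hh θ' <;> have := hh θ' <;> linarith
      rw [hset, Real.sInf_def, neg_neg]
      congr 1
      ext x
      simp only [Set.mem_image, Set.mem_neg, Set.mem_setOf_eq]
      constructor <;> rintro ⟨θ, h1, h2⟩ <;> exact ⟨θ, h1, by linarith⟩
    have hev' : ∀ᶠ h in nhdsWithin (0:ℝ) (Set.Ioi 0),
        sInf (ds t '' {θ : Θ | ∀ θ', s t θ ≤ s t θ'}) - ε ≤ (m (t + h) - m t) / h ∧
        (m (t + h) - m t) / h ≤ C := by
      filter_upwards [hev] with h hh
      obtain ⟨hth, hub2, hlb2⟩ := hh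
      rw [hnegsup (t + h), hnegsup t] at hub2 hlb2
      rw [hinf_eq] at hub2
      have e1 : ((-(⨅ θ, s (t + h) θ)) - (-(⨅ θ, s t θ))) / h = -((m (t + h) - m t) / h) := by
        rw [hm, hm]; ring
      rw [e1] at hub2 hlb2
      exact ⟨by linarith, by linarith⟩
    have hcb : IsCoboundedUnder (· ≥ ·) (nhdsWithin (0:ℝ) (Set.Ioi 0))
        (fun h => (m (t + h) - m t) / h) :=
      Filter.IsBoundedUnder.isCoboundedUnder_ge
        ⟨C, Filter.eventually_map.mpr (hev'.mono fun h hh => hh.2)⟩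
    have h2 : sInf (ds t '' {θ : Θ | ∀ θ', s t θ ≤ s t θ'}) - ε ≤ lowerDini m t :=
      Filter.le_liminf_of_le hcb (hev'.mono fun h hh => hh.1)
    linarith
end

section
/- Let μ be a σ-finite measure on ℝ^d and let ρ' : ℝ^d → ℝ be a strictly positive probability density with respect to μ, defining the probability measure σ with dσ = ρ' dμ. Assume σ satisfies the log-Sobolev inequality with constant λ > 0: for every continuously differentiable f : ℝ^d → ℝ with ∫ f² dσ = 1, one has ∫ f² log f² dσ ≤ (2/λ) ∫ ‖∇f‖² dσ. Let ρ be a probability density with respect to μ such that r := ρ/ρ' is strictly positive and continuously differentiable, and suppose ∫ ρ |log(ρ/ρ')| dμ and ∫ ‖∇ log(ρ/ρ')‖² ρ dμ are finite. Then ∫ ‖∇ log(ρ/ρ')‖² ρ dμ ≥ 2λ · ∫ ρ log(ρ/ρ') dμ. -/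
open MeasureTheory Real

lemma norm_gradient_eq_norm_fderiv {d : ℕ} (f : EuclideanSpace ℝ (Fin d) → ℝ)
    (x : EuclideanSpace ℝ (Fin d)) : ‖gradient f x‖ = ‖fderiv ℝ f x‖ := by
  simp [gradient]

/-- If the probability measure `σ = ρ' dμ` satisfies a log-Sobolev inequality with constant
`λ > 0`, then for any probability density `ρ` (w.r.t. `μ`) with smooth positive ratio
`r = ρ/ρ'`, the relative Fisher information dominates `2λ` times the KL divergence:
`∫ ‖∇ log(ρ/ρ')‖² ρ dμ ≥ 2λ ∫ ρ log(ρ/ρ') dμ`. -/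
theorem fisher_ge_lsi_kl {d : ℕ}
    (μ : Measure (EuclideanSpace ℝ (Fin d))) [SigmaFinite μ]
    (ρ ρ' : EuclideanSpace ℝ (Fin d) → ℝ)
    (hρm : Measurable ρ) (hρ'm : Measurable ρ')
    (hρpos : ∀ θ, 0 < ρ θ) (hρ'pos : ∀ θ, 0 < ρ' θ)
    (hρ1 : ∫ θ, ρ θ ∂μ = 1) (hρ'1 : ∫ θ, ρ' θ ∂μ = 1)
    (lam : ℝ) (hlam : 0 < lam)
    (hLSI : ∀ f : EuclideanSpace ℝ (Fin d) → ℝ, ContDiff ℝ 1 f →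
      (∫ θ, (f θ) ^ 2 * ρ' θ ∂μ) = 1 →
      ∫ θ, (f θ) ^ 2 * Real.log ((f θ) ^ 2) * ρ' θ ∂μ ≤
        (2 / lam) * ∫ θ, ‖gradient f θ‖ ^ 2 * ρ' θ ∂μ)
    (hr : ContDiff ℝ 1 (fun θ => ρ θ / ρ' θ))
    (hKLint : Integrable (fun θ => ρ θ * |Real.log (ρ θ / ρ' θ)|) μ)
    (hFishint : Integrable
      (fun θ => ‖gradient (fun x => Real.log (ρ x / ρ' x)) θ‖ ^ 2 * ρ θ) μ) :
    2 * lam * ∫ θ, ρ θ * Real.log (ρ θ / ρ' θ) ∂μ ≤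
      ∫ θ, ‖gradient (fun x => Real.log (ρ x / ρ' x)) θ‖ ^ 2 * ρ θ ∂μ := by
  have hrpos : ∀ θ, 0 < ρ θ / ρ' θ := fun θ => div_pos (hρpos θ) (hρ'pos θ)
  have hrmul : ∀ θ, (ρ θ / ρ' θ) * ρ' θ = ρ θ := fun θ =>
    div_mul_cancel₀ _ (ne_of_gt (hρ'pos θ))
  set f : EuclideanSpace ℝ (Fin d) → ℝ := fun θ => Real.sqrt (ρ θ / ρ' θ) with hfdef
  have hsq : ∀ θ, (f θ) ^ 2 = ρ θ / ρ' θ := fun θ => Real.sq_sqrt (le_of_lt (hrpos θ))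
  have hf : ContDiff ℝ 1 f := by
    rw [contDiff_iff_contDiffAt]
    intro θ
    exact (hr.contDiffAt).sqrt (ne_of_gt (hrpos θ))
  -- derivative facts
  have hdiff : ∀ θ, DifferentiableAt ℝ (fun x => ρ x / ρ' x) θ := fun θ =>
    (hr.differentiable one_ne_zero).differentiableAt
  have hgradlog : ∀ θ, ‖gradient (fun x => Real.log (ρ x / ρ' x)) θ‖ =
      |(ρ θ / ρ' θ)⁻¹| * ‖fderiv ℝ (fun x => ρ x / ρ' x) θ‖ := by
    intro θ
    rw [norm_gradient_eq_norm_fderiv]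
    have h1 : HasFDerivAt (fun x => Real.log (ρ x / ρ' x))
        ((ρ θ / ρ' θ)⁻¹ • fderiv ℝ (fun x => ρ x / ρ' x) θ) θ :=
      (hdiff θ).hasFDerivAt.log (ne_of_gt (hrpos θ))
    rw [h1.fderiv, norm_smul, norm_eq_abs]
  have hgradf : ∀ θ, ‖gradient f θ‖ =
      |1 / (2 * Real.sqrt (ρ θ / ρ' θ))| * ‖fderiv ℝ (fun x => ρ x / ρ' x) θ‖ := by
    intro θ
    rw [norm_gradient_eq_norm_fderiv]
    have h1 : HasFDerivAt f
        ((1 / (2 * Real.sqrt (ρ θ / ρ' θ))) • fderiv ℝ (fun x => ρ x / ρ' x) θ) θ :=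
      (hdiff θ).hasFDerivAt.sqrt (ne_of_gt (hrpos θ))
    rw [h1.fderiv, norm_smul, norm_eq_abs]
  -- pointwise identity between the energy integrands
  have hpoint : ∀ θ, ‖gradient f θ‖ ^ 2 * ρ' θ =
      (1 / 4) * (‖gradient (fun x => Real.log (ρ x / ρ' x)) θ‖ ^ 2 * ρ θ) := by
    intro θ
    have hs : 0 < Real.sqrt (ρ θ / ρ' θ) := Real.sqrt_pos.mpr (hrpos θ)
    have hs2 : Real.sqrt (ρ θ / ρ' θ) ^ 2 = ρ θ / ρ' θ := Real.sq_sqrt (le_of_lt (hrpos θ))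
    rw [hgradf θ, hgradlog θ, abs_of_pos (by positivity : (0:ℝ) < 1 / (2 * Real.sqrt (ρ θ / ρ' θ))),
      abs_of_pos (inv_pos.mpr (hrpos θ))]
    set N := ‖fderiv ℝ (fun x => ρ x / ρ' x) θ‖
    calc (1 / (2 * Real.sqrt (ρ θ / ρ' θ)) * N) ^ 2 * ρ' θ
        = N ^ 2 * ρ' θ / (4 * Real.sqrt (ρ θ / ρ' θ) ^ 2) := by
          ring
      _ = N ^ 2 * ρ' θ / (4 * (ρ θ / ρ' θ)) := by rw [hs2]
      _ = 1 / 4 * (((ρ θ / ρ' θ)⁻¹ * N) ^ 2 * ρ θ) := by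
          field_simp [(hρpos θ).ne', (hρ'pos θ).ne']
  -- normalization
  have hf1 : ∫ θ, (f θ) ^ 2 * ρ' θ ∂μ = 1 := by
    rw [show (fun θ => (f θ) ^ 2 * ρ' θ) = fun θ => ρ θ from funext fun θ => by
      rw [hsq θ, hrmul θ]]
    exact hρ1
  have hLSIf := hLSI f hf hf1
  have hKL : ∫ θ, (f θ) ^ 2 * Real.log ((f θ) ^ 2) * ρ' θ ∂μ =
      ∫ θ, ρ θ * Real.log (ρ θ / ρ' θ) ∂μ := by
    congr 1
    funext θ
    rw [hsq θ, mul_right_comm, hrmul θ]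
  have hE : ∫ θ, ‖gradient f θ‖ ^ 2 * ρ' θ ∂μ =
      (1 / 4) * ∫ θ, ‖gradient (fun x => Real.log (ρ x / ρ' x)) θ‖ ^ 2 * ρ θ ∂μ := by
    rw [show (fun θ => ‖gradient f θ‖ ^ 2 * ρ' θ) =
      fun θ => (1 / 4) * (‖gradient (fun x => Real.log (ρ x / ρ' x)) θ‖ ^ 2 * ρ θ) from
      funext hpoint]
    exact integral_const_mul _ _
  rw [hKL, hE] at hLSIf
  have hfin : (2 / lam) * ((1 / 4) *
      ∫ θ, ‖gradient (fun x => Real.log (ρ x / ρ' x)) θ‖ ^ 2 * ρ θ ∂μ) =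
      (∫ θ, ‖gradient (fun x => Real.log (ρ x / ρ' x)) θ‖ ^ 2 * ρ θ ∂μ) / (2 * lam) := by
    field_simp; ring
  rw [hfin] at hLSIf
  have := mul_le_mul_of_nonneg_left hLSIf (le_of_lt (by linarith : (0:ℝ) < 2 * lam))
  calc 2 * lam * ∫ θ, ρ θ * Real.log (ρ θ / ρ' θ) ∂μ
      ≤ 2 * lam * ((∫ θ, ‖gradient (fun x => Real.log (ρ x / ρ' x)) θ‖ ^ 2 * ρ θ ∂μ) / (2 * lam)) := this
    _ = _ := by field_simp
end

section
/- Let P and Q be probability measures on a measurable space (Θ, ℱ) with P absolutely continuous with respect to Q, and suppose the Kullback–Leibler divergence KL(P‖Q) = ∫ log(dP/dQ) dP is finite. Then for every ε > 0, the hockey-stick divergence satisfies HS_ε(P‖Q) = sup_{S∈ℱ}[P(S) − e^ε Q(S)] ≤ KL(P‖Q)/ε; in particular, for every measurable set S, P(S) ≤ e^ε·Q(S) + KL(P‖Q)/ε. -/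
open MeasureTheory Real

lemma log_ge_aux {t : ℝ} (ht : 0 < t) : 1 - 1/t ≤ Real.log t := by
  have h := Real.log_le_sub_one_of_pos (show (0:ℝ) < t⁻¹ by positivity)
  rw [Real.log_inv] at h
  have : (1:ℝ)/t = t⁻¹ := one_div t
  linarith

lemma key_ineq {ε x : ℝ} (hε : 0 < ε) (hx : 0 ≤ x) :
    ε * (x - Real.exp ε) ≤ x * Real.log x + 1 - x := by
  have hexp : 0 < Real.exp ε := Real.exp_pos ε
  have hε1 : (1 - ε) * Real.exp ε ≤ 1 := by
    have h1 : 1 - ε ≤ Real.exp (-ε) := by linarith [Real.add_one_le_exp (-ε)]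
    have h2 : Real.exp (-ε) * Real.exp ε = 1 := by
      rw [← Real.exp_add]; simp
    nlinarith
  rcases eq_or_lt_of_le hx with h0 | hx0
  · simp [← h0]; nlinarith
  have base : x - 1 ≤ x * Real.log x := by
    have := log_ge_aux hx0
    have hx' : x * (1 - 1/x) = x - 1 := by field_simp
    nlinarith
  rcases le_or_gt x (Real.exp ε) with hle | hgt
  · nlinarith
  · have hdiv : 0 < x / Real.exp ε := by positivity
    have h2 := log_ge_aux hdiv
    have hlog : Real.log (x / Real.exp ε) = Real.log x - ε := by
      rw [Real.log_div (ne_of_gt hx0) (Real.exp_ne_zero _), Real.log_exp]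
    rw [hlog] at h2
    have hinv : 1 / (x / Real.exp ε) = Real.exp ε / x := by
      field_simp
    rw [hinv] at h2
    have : x * (Real.log x - ε) ≥ x * (1 - Real.exp ε / x) := by
      apply mul_le_mul_of_nonneg_left h2 (le_of_lt hx0)
    have hxe : x * (Real.exp ε / x) = Real.exp ε := by field_simp
    nlinarith

/-- The hockey-stick divergence is bounded by `KL(P‖Q)/ε`: for probability measures `P ≪ Q`
with finite KL divergence `KL(P‖Q) = ∫ log(dP/dQ) dP` and every `ε > 0`,
`sup_S [P(S) − e^ε Q(S)] ≤ KL(P‖Q)/ε`; in particular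
`P(S) ≤ e^ε Q(S) + KL(P‖Q)/ε` for every measurable `S`. -/
theorem hockeyStick_le_kl_div_eps
    {Θ : Type*} [MeasurableSpace Θ]
    (P Q : Measure Θ) [IsProbabilityMeasure P] [IsProbabilityMeasure Q]
    (hPQ : P ≪ Q)
    (KL : ℝ) (hKL : KL = ∫ θ, Real.log ((P.rnDeriv Q θ).toReal) ∂P)
    (hKLint : Integrable (fun θ => Real.log ((P.rnDeriv Q θ).toReal)) P)
    (ε : ℝ) (hε : 0 < ε) :
    (⨆ S : {S : Set Θ // MeasurableSet S},
        ((P S.1).toReal - Real.exp ε * (Q S.1).toReal)) ≤ KL / ε ∧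
    ∀ S : Set Θ, MeasurableSet S →
      (P S).toReal ≤ Real.exp ε * (Q S).toReal + KL / ε := by
  set f : Θ → ℝ := fun θ => (P.rnDeriv Q θ).toReal with hf_def
  have hf_nonneg : ∀ θ, 0 ≤ f θ := fun θ => ENNReal.toReal_nonneg
  have hf_int : Integrable f Q := Measure.integrable_toReal_rnDeriv
  have hfl_int : Integrable (fun θ => f θ * Real.log (f θ)) Q := by
    have := (integrable_rnDeriv_smul_iff hPQ
      (f := fun θ => Real.log (f θ))).2 hKLint
    simpa [smul_eq_mul] using this
  have hfl_eq : ∫ θ, f θ * Real.log (f θ) ∂Q = KL := by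
    have := integral_rnDeriv_smul hPQ (f := fun θ => Real.log (f θ))
    rw [hKL]
    simpa [smul_eq_mul] using this
  have hf_eq : ∫ θ, f θ ∂Q = 1 := by
    rw [Measure.integral_toReal_rnDeriv hPQ]
    simp
  set g : Θ → ℝ := fun θ => (f θ * Real.log (f θ) + 1 - f θ) / ε with hg_def
  have hg_int : Integrable g Q :=
    (((hfl_int.add (integrable_const 1)).sub hf_int).div_const ε)
  have hg_nonneg : ∀ θ, 0 ≤ g θ := by
    intro θ
    have := key_ineq hε (hf_nonneg θ)
    have hle : f θ - Real.exp ε ≤ 0 ∨ True := Or.inr trivial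
    have h0 : (0:ℝ) ≤ f θ * Real.log (f θ) + 1 - f θ := by
      rcases eq_or_lt_of_le (hf_nonneg θ) with h | h
      · simp [← h]
      · have hb := log_ge_aux h
        have : f θ * (1 - 1/(f θ)) = f θ - 1 := by field_simp
        nlinarith
    positivity
  have hg_integral : ∫ θ, g θ ∂Q = KL / ε := by
    have h1 : Integrable (fun θ => f θ * Real.log (f θ) + 1) Q :=
      hfl_int.add (integrable_const 1)
    rw [hg_def]
    simp only
    rw [integral_div, integral_sub h1 hf_int,
      integral_add hfl_int (integrable_const 1), hfl_eq, hf_eq]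
    simp
  have hkey : ∀ S : Set Θ, MeasurableSet S →
      (P S).toReal - Real.exp ε * (Q S).toReal ≤ KL / ε := by
    intro S hS
    have hPS : (P S).toReal = ∫ θ in S, f θ ∂Q :=
      (Measure.setIntegral_toReal_rnDeriv hPQ S).symm
    have hQS : Real.exp ε * (Q S).toReal = ∫ θ in S, Real.exp ε ∂Q := by
      rw [setIntegral_const, smul_eq_mul, mul_comm]
      rfl
    have step1 : (P S).toReal - Real.exp ε * (Q S).toReal
        = ∫ θ in S, (f θ - Real.exp ε) ∂Q := by
      rw [hPS, hQS, integral_sub hf_int.restrict (integrable_const _)]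
    have step2 : ∫ θ in S, (f θ - Real.exp ε) ∂Q ≤ ∫ θ in S, g θ ∂Q := by
      apply setIntegral_mono_on (hf_int.restrict.sub (integrable_const _))
        hg_int.restrict hS
      intro θ _
      have := key_ineq hε (hf_nonneg θ)
      show f θ - Real.exp ε ≤ (f θ * Real.log (f θ) + 1 - f θ) / ε
      rw [le_div_iff₀ hε]
      nlinarith
    have step3 : ∫ θ in S, g θ ∂Q ≤ ∫ θ, g θ ∂Q :=
      setIntegral_le_integral hg_int (Filter.Eventually.of_forall hg_nonneg)
    rw [step1]
    calc _ ≤ ∫ θ in S, g θ ∂Q := step2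
      _ ≤ ∫ θ, g θ ∂Q := step3
      _ = KL / ε := hg_integral
  constructor
  · have : Nonempty {S : Set Θ // MeasurableSet S} := ⟨⟨∅, MeasurableSet.empty⟩⟩
    exact ciSup_le fun S => hkey S.1 S.2
  · intro S hS
    linarith [hkey S hS]
end

section
/- Let Θ ⊂ ℝ^d be a compact set with Lebesgue volume m = Vol(Θ) < ∞, let f : Θ → ℝ be measurable and bounded, and set f* = inf_{θ∈Θ} f(θ). Fix β > 0 and let π_β be the probability measure on Θ with density π_β(θ) = exp(−β f(θ))/Z_β, Z_β = ∫_Θ exp(−β f(θ)) dθ, with respect to Lebesgue measure. Fix α > 0 and suppose the sublevel set S_α = {θ ∈ Θ : f(θ) ≤ f* + α} has m_α = Vol(S_α) > 0. Then for every r ≥ 0, π_β({θ : f(θ) ≥ f* + α + r}) ≤ min(1, (m/m_α)·exp(−β r)). -/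
open MeasureTheory Real

/-- Tail bound for the exponential mechanism: for the Gibbs probability measure
`π_β ∝ exp(−β f)` on a compact `Θ` of finite volume `m`, with near-optimal sublevel set
`S_α` of positive volume `m_α`, one has
`π_β({f ≥ f* + α + r}) ≤ min(1, (m/m_α) e^{−β r})` for every `r ≥ 0`. -/
theorem exponential_mechanism_tail_bound {d : ℕ}
    (Θ : Set (EuclideanSpace ℝ (Fin d))) (hΘc : IsCompact Θ) (hΘm : MeasurableSet Θ)
    (f : EuclideanSpace ℝ (Fin d) → ℝ) (hfm : Measurable f)
    (C : ℝ) (hfbd : ∀ θ ∈ Θ, |f θ| ≤ C)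
    (fstar : ℝ) (hfstar : fstar = sInf (f '' Θ))
    (β : ℝ) (hβ : 0 < β)
    (Zβ : ℝ) (hZβ : Zβ = ∫ θ in Θ, Real.exp (-(β * f θ)))
    (πβ : Measure (EuclideanSpace ℝ (Fin d)))
    (hπβ : πβ = (volume.restrict Θ).withDensity
      (fun θ => ENNReal.ofReal (Real.exp (-(β * f θ)) / Zβ)))
    (m mα : ℝ) (hm : m = (volume Θ).toReal)
    (α : ℝ) (hα : 0 < α)
    (hmα : mα = (volume {θ ∈ Θ | f θ ≤ fstar + α}).toReal)
    (hmαpos : 0 < mα)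
    (r : ℝ) (hr : 0 ≤ r) :
    πβ {θ | fstar + α + r ≤ f θ} ≤
      ENNReal.ofReal (min 1 (m / mα * Real.exp (-(β * r)))) := by
  have hΘfin : volume Θ < ⊤ := hΘc.measure_lt_top
  set g : EuclideanSpace ℝ (Fin d) → ℝ := fun θ => Real.exp (-(β * f θ)) with hg
  have hgm : Measurable g := Real.measurable_exp.comp (measurable_const.mul hfm).neg
  -- integrability of g on Θ
  have hgint : IntegrableOn g Θ := by
    apply Measure.integrableOn_of_bounded (M := Real.exp (β * C)) hΘfin.ne
      hgm.aestronglyMeasurable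
    rw [ae_restrict_iff' hΘm]
    filter_upwards with θ hθ
    rw [Real.norm_eq_abs, abs_of_pos (Real.exp_pos _)]
    apply Real.exp_le_exp.2
    have := (abs_le.1 (hfbd θ hθ)).1
    nlinarith
  -- the sublevel set
  set S : Set (EuclideanSpace ℝ (Fin d)) := {θ ∈ Θ | f θ ≤ fstar + α} with hSdef
  have hSm : MeasurableSet S := hΘm.inter (hfm measurableSet_Iic)
  have hSfin : volume S < ⊤ := lt_of_le_of_lt (measure_mono (fun x hx => hx.1)) hΘfin
  -- lower bound on the objective
  have hfs : ∀ θ ∈ Θ, fstar ≤ f θ := by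
    intro θ hθ
    rw [hfstar]
    exact csInf_le ⟨-C, fun y ⟨x, hx, hxy⟩ => hxy ▸ (abs_le.1 (hfbd x hx)).1⟩ ⟨θ, hθ, rfl⟩
  -- lower bound for Zβ
  have hc1 : mα * Real.exp (-(β * (fstar + α))) ≤ Zβ := by
    rw [hZβ, hmα]
    calc (volume S).toReal * Real.exp (-(β * (fstar + α)))
        = Real.exp (-(β * (fstar + α))) * (volume S).toReal := by ring
      _ ≤ ∫ θ in S, g θ := by
          apply setIntegral_ge_of_const_le_real hSm hSfin.ne
          · intro x hx
            apply Real.exp_le_exp.2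
            have := hx.2
            nlinarith
          · exact hgint.mono_set (fun x hx => hx.1)
      _ ≤ ∫ θ in Θ, g θ := by
          apply setIntegral_mono_set hgint
          · filter_upwards with θ using (Real.exp_pos _).le
          · exact HasSubset.Subset.eventuallyLE (fun x hx => hx.1)
  have hZpos : 0 < Zβ :=
    lt_of_lt_of_le (by positivity) hc1
  have hmnn : 0 ≤ m := hm ▸ ENNReal.toReal_nonneg
  -- measurability of the tail set
  set A : Set (EuclideanSpace ℝ (Fin d)) := {θ | fstar + α + r ≤ f θ} with hAdef
  have hAm : MeasurableSet A := hfm measurableSet_Ici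
  -- two bounds
  have bound1 : πβ A ≤ 1 := by
    have htot : πβ Set.univ = 1 := by
      rw [hπβ, withDensity_apply _ MeasurableSet.univ, Measure.restrict_univ,
        ← ofReal_integral_eq_lintegral_ofReal (hgint.div_const Zβ)
          (by filter_upwards with θ using by positivity)]
      rw [integral_div, ← hZβ, div_self hZpos.ne', ENNReal.ofReal_one]
    calc πβ A ≤ πβ Set.univ := measure_mono (Set.subset_univ _)
      _ = 1 := htot
  have bound2 : πβ A ≤ ENNReal.ofReal (m / mα * Real.exp (-(β * r))) := by
    rw [hπβ, withDensity_apply _ hAm]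
    set c : ℝ := Real.exp (-(β * (fstar + α + r))) / Zβ with hcdef
    have hcnn : 0 ≤ c := by positivity
    calc ∫⁻ θ in A, ENNReal.ofReal (g θ / Zβ) ∂(volume.restrict Θ)
        ≤ ∫⁻ _ in A, ENNReal.ofReal c ∂(volume.restrict Θ) := by
          apply setLIntegral_mono measurable_const
          intro θ hθ
          apply ENNReal.ofReal_le_ofReal
          apply div_le_div_of_nonneg_right ?_ hZpos.le
          have hθ' : fstar + α + r ≤ f θ := hθ
          exact Real.exp_le_exp.2 (by nlinarith)
      _ = ENNReal.ofReal c * (volume.restrict Θ) A := setLIntegral_const _ _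
      _ ≤ ENNReal.ofReal c * volume Θ := by
          apply mul_le_mul_right
          rw [Measure.restrict_apply hAm]
          exact measure_mono Set.inter_subset_right
      _ = ENNReal.ofReal c * ENNReal.ofReal m := by
          rw [hm, ENNReal.ofReal_toReal hΘfin.ne]
      _ = ENNReal.ofReal (c * m) := (ENNReal.ofReal_mul hcnn).symm
      _ ≤ ENNReal.ofReal (m / mα * Real.exp (-(β * r))) := by
          apply ENNReal.ofReal_le_ofReal
          have hexp : Real.exp (-(β * (fstar + α + r)))
              = Real.exp (-(β * (fstar + α))) * Real.exp (-(β * r)) := by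
            rw [← Real.exp_add]; ring_nf
          have hcle : c ≤ Real.exp (-(β * r)) / mα := by
            rw [hcdef, hexp, div_le_div_iff₀ hZpos hmαpos]
            calc Real.exp (-(β * (fstar + α))) * Real.exp (-(β * r)) * mα
                = Real.exp (-(β * r)) * (mα * Real.exp (-(β * (fstar + α)))) := by ring
              _ ≤ Real.exp (-(β * r)) * Zβ := by
                  exact mul_le_mul_of_nonneg_left hc1 (Real.exp_pos _).le
          calc c * m ≤ Real.exp (-(β * r)) / mα * m :=
                mul_le_mul_of_nonneg_right hcle hmnn
            _ = m / mα * Real.exp (-(β * r)) := by field_simp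
  rcases le_total 1 (m / mα * Real.exp (-(β * r))) with h | h
  · rw [min_eq_left h, ENNReal.ofReal_one]; exact bound1
  · rw [min_eq_right h]; exact bound2
end
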